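/- arXiv:2011.13310 — 2 statements merged into one kernel-verified Lean document; each statement's English description precedes it below -/
import Mathlib

section
/- Let G be a torsion GGS group and H ≤ G a subgroup of type III generated by a set S ⊆ H. Then for any x ∈ S with α_x ≠ 0, the set S' = { x^{k_1} y x^{k_2} : y ∈ S, k_1, k_2 ∈ {0,1,...,p−1}, k_1 α_x + α_y + k_2 α_x ≡ 0 mod p } generates Stab_H(L_1), the stabilizer in H of the first level. -/
/-- Vertices of the rooted regular tree over alphabet `A`: finite words in `A`. -/
abbrev Vert (A : Type*) := List A

/-- The automorphism group of the rooted regular tree with vertex set `Vert A`: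
length-preserving permutations of the vertices that preserve the prefix order. -/
def treeAut (A : Type*) : Subgroup (Equiv.Perm (Vert A)) where
  carrier := { g | (∀ v : Vert A, (g v).length = v.length) ∧
    ∀ v w : Vert A, v <+: w ↔ g v <+: g w }
  one_mem' := ⟨fun _ => rfl, fun _ _ => Iff.rfl⟩
  mul_mem' := by
    rintro g h ⟨hg1, hg2⟩ ⟨hh1, hh2⟩
    refine ⟨fun v => ?_, fun v w => ?_⟩
    · simp only [Equiv.Perm.mul_apply, hg1, hh1]
    · simpa only [Equiv.Perm.mul_apply] using (hh2 v w).trans (hg2 (h v) (h w))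
  inv_mem' := by
    rintro g ⟨hg1, hg2⟩
    refine ⟨fun v => ?_, fun v w => ?_⟩
    · have h1 := hg1 (g⁻¹ v)
      rw [show g (g⁻¹ v) = v from g.apply_symm_apply v] at h1
      exact h1.symm
    · have h2 := hg2 (g⁻¹ v) (g⁻¹ w)
      rw [show g (g⁻¹ v) = v from g.apply_symm_apply v,
        show g (g⁻¹ w) = w from g.apply_symm_apply w] at h2
      exact h2.symm

open scoped Classical in
/-- The section `φ_v(g)` of an automorphism `g` at the vertex `v`: the unique
permutation `s` with `g (v ++ w) = g v ++ s w` for all `w` (it exists and is unique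
whenever `g` is a tree automorphism). -/
noncomputable def sect {A : Type*} (g : Equiv.Perm (Vert A)) (v : Vert A) :
    Equiv.Perm (Vert A) :=
  if h : ∃ s : Equiv.Perm (Vert A), ∀ w : Vert A, g (v ++ w) = g v ++ s w then h.choose else 1

/-- The `n`-th level of the tree: words of length `n`. -/
def level (A : Type*) (n : ℕ) : Set (Vert A) := { v | v.length = n }

/-- The pointwise stabilizer in `G` of a set `S` of vertices. -/
def stabSet {A : Type*} (G : Subgroup (Equiv.Perm (Vert A))) (S : Set (Vert A)) :
    Subgroup (Equiv.Perm (Vert A)) where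
  carrier := { g | g ∈ G ∧ ∀ v ∈ S, g v = v }
  one_mem' := ⟨G.one_mem, fun _ _ => rfl⟩
  mul_mem' := by
    rintro g h ⟨hg, hg2⟩ ⟨hh, hh2⟩
    exact ⟨G.mul_mem hg hh, fun v hv => by
      simp only [Equiv.Perm.mul_apply, hh2 v hv, hg2 v hv]⟩
  inv_mem' := by
    rintro g ⟨hg, hg2⟩
    refine ⟨G.inv_mem hg, fun v hv => ?_⟩
    conv_lhs => rw [← hg2 v hv]
    exact g.symm_apply_apply v

/-- The stabilizer in `G` of a single vertex `v`. -/
def vstab {A : Type*} (G : Subgroup (Equiv.Perm (Vert A))) (v : Vert A) :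
    Subgroup (Equiv.Perm (Vert A)) := stabSet G {v}

/-- The pointwise stabilizer in `G` of the `n`-th level. -/
def lstab {A : Type*} (G : Subgroup (Equiv.Perm (Vert A))) (n : ℕ) :
    Subgroup (Equiv.Perm (Vert A)) := stabSet G (level A n)

/-- The rigid stabilizer of a vertex `v` in `G`: elements of `G` acting trivially
outside the subtree rooted at `v`. -/
def rist {A : Type*} (G : Subgroup (Equiv.Perm (Vert A))) (v : Vert A) :
    Subgroup (Equiv.Perm (Vert A)) where
  carrier := { g | g ∈ G ∧ ∀ w : Vert A, ¬ v <+: w → g w = w }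
  one_mem' := ⟨G.one_mem, fun _ _ => rfl⟩
  mul_mem' := by
    rintro g h ⟨hg, hg2⟩ ⟨hh, hh2⟩
    exact ⟨G.mul_mem hg hh, fun w hw => by
      simp only [Equiv.Perm.mul_apply, hh2 w hw, hg2 w hw]⟩
  inv_mem' := by
    rintro g ⟨hg, hg2⟩
    refine ⟨G.inv_mem hg, fun w hw => ?_⟩
    conv_lhs => rw [← hg2 w hw]
    exact g.symm_apply_apply w

/-- The rigid stabilizer of the `n`-th level: the subgroup generated by the rigid
stabilizers of the vertices of level `n`. -/
def ristLevel {A : Type*} (G : Subgroup (Equiv.Perm (Vert A))) (n : ℕ) :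
    Subgroup (Equiv.Perm (Vert A)) := ⨆ v ∈ level A n, rist G v

/-- The subgroup `φ_v(H)` generated by (equivalently, consisting of, when `H`
stabilizes `v`) the sections at `v` of the elements of `H`. -/
def sectGrp {A : Type*} (H : Subgroup (Equiv.Perm (Vert A))) (v : Vert A) :
    Subgroup (Equiv.Perm (Vert A)) :=
  Subgroup.closure ((fun g => sect g v) '' (H : Set (Equiv.Perm (Vert A))))

/-- A transversal of the tree: a finite set of vertices met exactly once by every
infinite ray from the root. -/
def IsTransversal (A : Type*) (X : Set (Vert A)) : Prop :=
  X.Finite ∧ ∀ ω : ℕ → A, ∃! n : ℕ, (List.ofFn fun i : Fin n => ω i.val) ∈ X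

/-- The subgroup induction property. -/
def HasSGIP {A : Type*} (G : Subgroup (Equiv.Perm (Vert A))) : Prop :=
  ∀ H : Subgroup (Equiv.Perm (Vert A)), H ≤ G → H.FG →
    ∃ X : Set (Vert A), IsTransversal A X ∧ ∀ v ∈ X,
      sectGrp (stabSet H X) v = ⊥ ∨
      (sectGrp (stabSet H X) v).relIndex (sectGrp (vstab G v) v) ≠ 0

/-- `G` acts transitively on every level of the tree. -/
def LevelTransitive {A : Type*} (G : Subgroup (Equiv.Perm (Vert A))) : Prop :=
  ∀ v w : Vert A, v.length = w.length → ∃ g ∈ G, g v = w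

/-- Weakly branch: level-transitive with all rigid vertex stabilizers infinite. -/
def IsWeaklyBranch {A : Type*} (G : Subgroup (Equiv.Perm (Vert A))) : Prop :=
  LevelTransitive G ∧ ∀ v : Vert A, (rist G v : Set (Equiv.Perm (Vert A))).Infinite

/-- Branch: weakly branch and every level rigid stabilizer has finite index in `G`. -/
def IsBranch {A : Type*} (G : Subgroup (Equiv.Perm (Vert A))) : Prop :=
  IsWeaklyBranch G ∧ ∀ n : ℕ, (ristLevel G n).relIndex G ≠ 0

/-- Self-similar: all sections of vertex stabilizers land in `G`. -/
def SelfSimilar {A : Type*} (G : Subgroup (Equiv.Perm (Vert A))) : Prop :=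
  ∀ v : Vert A, sectGrp (vstab G v) v ≤ G

/-- Self-replicating: `φ_v(Stab_G(v)) = G` for every vertex `v`. -/
def SelfReplicating {A : Type*} (G : Subgroup (Equiv.Perm (Vert A))) : Prop :=
  ∀ v : Vert A, sectGrp (vstab G v) v = G

/-- Strongly self-replicating: self-similar and `φ_v(Stab_G(L_n)) = G` for every `n`
and every vertex `v` of level `n`. -/
def StronglySelfReplicating {A : Type*} (G : Subgroup (Equiv.Perm (Vert A))) : Prop :=
  SelfSimilar G ∧ ∀ (n : ℕ) (v : Vert A), v.length = n → sectGrp (lstab G n) v = G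

/-- The congruence subgroup property: every finite-index subgroup of `G` contains
some level stabilizer. -/
def HasCSP {A : Type*} (G : Subgroup (Equiv.Perm (Vert A))) : Prop :=
  ∀ K : Subgroup (Equiv.Perm (Vert A)), K ≤ G → K.relIndex G ≠ 0 →
    ∃ n : ℕ, lstab G n ≤ K

/-- A group is just infinite if it is infinite and all its proper quotients are
finite, i.e. every nontrivial normal subgroup has finite index. -/
def JustInfinite (G : Type*) [Group G] : Prop :=
  Infinite G ∧ ∀ N : Subgroup G, N.Normal → N ≠ ⊥ → N.index ≠ 0

/-- `Φ_F(G)`: the intersection of all maximal subgroups of finite index of `G`. -/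
def PhiF (G : Type*) [Group G] : Subgroup G :=
  ⨅ M ∈ { M : Subgroup G | IsCoatom M ∧ M.index ≠ 0 }, M

/-- Two groups are commensurable if they have isomorphic finite-index subgroups. -/
def CommGroups (G₁ : Type*) (G₂ : Type*) [Group G₁] [Group G₂] : Prop :=
  ∃ (H₁ : Subgroup G₁) (H₂ : Subgroup G₂),
    H₁.index ≠ 0 ∧ H₂.index ≠ 0 ∧ Nonempty (H₁ ≃* H₂)
/-- The rooted automorphism `a` of the `p`-regular tree: the cyclic permutation
`(1 2 … p)` of the first level (adding `1` to the first letter). -/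
def aPerm (p : ℕ) : Equiv.Perm (Vert (ZMod p)) where
  toFun := fun l => match l with
    | [] => ([] : Vert (ZMod p))
    | x :: w => (x + 1) :: w
  invFun := fun l => match l with
    | [] => ([] : Vert (ZMod p))
    | x :: w => (x - 1) :: w
  left_inv := by rintro (_ | ⟨x, w⟩) <;> simp
  right_inv := by rintro (_ | ⟨x, w⟩) <;> simp

/-- The recursively defined generator `b = (a^{e_0}, …, a^{e_{p-2}}, b)`. -/
def bFun (p : ℕ) (e : Fin (p - 1) → ZMod p) : Vert (ZMod p) → Vert (ZMod p)
  | [] => []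
  | x :: w =>
    if h : x.val < p - 1 then x :: (aPerm p ^ (e ⟨x.val, h⟩).val) w
    else x :: bFun p e w

/-- Inverse of `bFun`. -/
def bInvFun (p : ℕ) (e : Fin (p - 1) → ZMod p) : Vert (ZMod p) → Vert (ZMod p)
  | [] => []
  | x :: w =>
    if h : x.val < p - 1 then x :: ((aPerm p ^ (e ⟨x.val, h⟩).val)⁻¹ : Equiv.Perm (Vert (ZMod p))) w
    else x :: bInvFun p e w

/-- The generator `b` of the GGS group as a tree automorphism. -/
def bPerm (p : ℕ) (e : Fin (p - 1) → ZMod p) : Equiv.Perm (Vert (ZMod p)) where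
  toFun := bFun p e
  invFun := bInvFun p e
  left_inv := by
    intro l
    induction l with
    | nil => rfl
    | cons x w ih =>
      by_cases h : x.val < p - 1
      · simp [bFun, bInvFun, h]
      · simp [bFun, bInvFun, h, ih]
  right_inv := by
    intro l
    induction l with
    | nil => rfl
    | cons x w ih =>
      by_cases h : x.val < p - 1
      · simp [bFun, bInvFun, h]
      · simp [bFun, bInvFun, h, ih]

/-- The GGS group with defining vector `e`. -/
def GGSGroup (p : ℕ) (e : Fin (p - 1) → ZMod p) : Subgroup (Equiv.Perm (Vert (ZMod p))) :=
  Subgroup.closure {aPerm p, bPerm p e}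

/-- The derived subgroup `G'` of the GGS group, as a subgroup of the ambient
permutation group. -/
def GGSDerived (p : ℕ) (e : Fin (p - 1) → ZMod p) : Subgroup (Equiv.Perm (Vert (ZMod p))) :=
  (commutator ↥(GGSGroup p e)).map (GGSGroup p e).subtype

/-- `g` can be written as `a^{i_1} b^{j_1} ⋯ a^{i_n} b^{j_n} a^{i_{n+1}}`. -/
def bWordLe (p : ℕ) (e : Fin (p - 1) → ZMod p) (g : Equiv.Perm (Vert (ZMod p)))
    (n : ℕ) : Prop :=
  ∃ i j : ℕ → ℤ,
    g = ((List.range n).map fun k => aPerm p ^ i k * bPerm p e ^ j k).prod * aPerm p ^ i n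

/-- The `b`-length `|g|`: the least number of `b`-syllables needed to write `g`. -/
noncomputable def bLen (p : ℕ) (e : Fin (p - 1) → ZMod p)
    (g : Equiv.Perm (Vert (ZMod p))) : ℕ :=
  sInf { n : ℕ | bWordLe p e g n }

/-- The generating set `{a, a², …, a^{p-1}, b, b², …, b^{p-1}}`. -/
def GGSGens (p : ℕ) (e : Fin (p - 1) → ZMod p) : Set (Equiv.Perm (Vert (ZMod p))) :=
  { x | ∃ k : ℕ, 1 ≤ k ∧ k ≤ p - 1 ∧ (x = aPerm p ^ k ∨ x = bPerm p e ^ k) }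

/-- The total length `λ(g)`: word length with respect to all nontrivial powers of
`a` and of `b`. -/
noncomputable def totalLen (p : ℕ) (e : Fin (p - 1) → ZMod p)
    (g : Equiv.Perm (Vert (ZMod p))) : ℕ :=
  sInf { n : ℕ | ∃ f : Fin n → Equiv.Perm (Vert (ZMod p)),
    (∀ k, f k ∈ GGSGens p e) ∧ g = (List.ofFn f).prod }

/-- `α` and `β` are the exponents (mod `p`) with `g ≡ a^α b^β` modulo `G'`. -/
def IsAlphaBeta (p : ℕ) (e : Fin (p - 1) → ZMod p) (g : Equiv.Perm (Vert (ZMod p)))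
    (α β : ℕ) : Prop :=
  α < p ∧ β < p ∧ (aPerm p ^ α * bPerm p e ^ β)⁻¹ * g ∈ GGSDerived p e

/-- `H` is of type II: `HG'/G' = ⟨b^j G'⟩` for some `j ∈ {0,1}`. -/
def TypeII (p : ℕ) (e : Fin (p - 1) → ZMod p)
    (H : Subgroup (Equiv.Perm (Vert (ZMod p)))) : Prop :=
  ∃ j : ℕ, j ≤ 1 ∧
    H ⊔ GGSDerived p e = Subgroup.closure {bPerm p e ^ j} ⊔ GGSDerived p e

/-- `H` is of type III: `HG'/G' = ⟨a b^j G'⟩` for some `j ∈ {0,…,p-1}`. -/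
def TypeIII (p : ℕ) (e : Fin (p - 1) → ZMod p)
    (H : Subgroup (Equiv.Perm (Vert (ZMod p)))) : Prop :=
  ∃ j : ℕ, j < p ∧
    H ⊔ GGSDerived p e = Subgroup.closure {aPerm p * bPerm p e ^ j} ⊔ GGSDerived p e

section AuxGGS

variable {p : ℕ} {e : Fin (p - 1) → ZMod p}

lemma aPerm_nil' : aPerm p ([] : Vert (ZMod p)) = [] := rfl

lemma aPerm_pow_nil (k : ℕ) : (aPerm p ^ k) ([] : Vert (ZMod p)) = [] := by
  induction k with
  | zero => rfl
  | succ n ih => rw [pow_succ, Equiv.Perm.mul_apply, aPerm_nil', ih]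

lemma aPerm_cons (x : ZMod p) (w : List (ZMod p)) : aPerm p (x :: w) = (x + 1) :: w := rfl

lemma aPerm_pow_cons (k : ℕ) (x : ZMod p) (w : List (ZMod p)) :
    (aPerm p ^ k) (x :: w) = (x + (k : ZMod p)) :: w := by
  induction k generalizing x with
  | zero => simp
  | succ n ih =>
    rw [pow_succ, Equiv.Perm.mul_apply, aPerm_cons, ih]
    congr 1
    push_cast
    ring

lemma aPerm_pow_p (hp0 : 0 < p) : aPerm p ^ p = 1 := by
  apply Equiv.ext
  intro v
  cases v with
  | nil => simpa using aPerm_pow_nil p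
  | cons x w => rw [aPerm_pow_cons]; simp

lemma bPerm_nil' : bPerm p e ([] : Vert (ZMod p)) = [] := rfl

lemma bPerm_cons (x : ZMod p) (w : List (ZMod p)) :
    bPerm p e (x :: w) = if h : x.val < p - 1 then x :: (aPerm p ^ (e ⟨x.val, h⟩).val) w
      else x :: bPerm p e w := rfl

lemma bPerm_pow_cons (k : ℕ) (x : ZMod p) (w : List (ZMod p)) :
    (bPerm p e ^ k) (x :: w) = if h : x.val < p - 1 then
      x :: ((aPerm p ^ (e ⟨x.val, h⟩).val) ^ k) w
      else x :: (bPerm p e ^ k) w := by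
  induction k generalizing w with
  | zero => split <;> simp
  | succ n ih =>
    rw [pow_succ, Equiv.Perm.mul_apply, bPerm_cons]
    split
    · next h =>
      rw [ih, dif_pos h, ← Equiv.Perm.mul_apply, ← pow_succ]
    · next h =>
      rw [ih, dif_neg h, ← Equiv.Perm.mul_apply, ← pow_succ]

lemma bPerm_pow_nil (k : ℕ) : (bPerm p e ^ k) ([] : Vert (ZMod p)) = [] := by
  induction k with
  | zero => rfl
  | succ n ih => rw [pow_succ, Equiv.Perm.mul_apply, bPerm_nil', ih]

lemma bPerm_pow_p (hp0 : 0 < p) : bPerm p e ^ p = 1 := by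
  apply Equiv.ext
  intro v
  induction v with
  | nil => simpa using bPerm_pow_nil p
  | cons x w ih =>
    rw [bPerm_pow_cons, Equiv.Perm.one_apply]
    split
    · rw [← pow_mul, mul_comm, pow_mul, aPerm_pow_p hp0, one_pow, Equiv.Perm.one_apply]
    · rw [ih, Equiv.Perm.one_apply]

/-- `g` translates level one by `c`. -/
def TrC (p : ℕ) (g : Equiv.Perm (Vert (ZMod p))) (c : ZMod p) : Prop :=
  ∀ y : ZMod p, g [y] = [y + c]

lemma TrC_unique {g : Equiv.Perm (Vert (ZMod p))} {c c' : ZMod p}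
    (h : TrC p g c) (h' : TrC p g c') : c = c' := by
  have := (h 0).symm.trans (h' 0)
  simpa using this

lemma TrC_one : TrC p (1 : Equiv.Perm (Vert (ZMod p))) 0 := fun y => by simp

lemma TrC_mul {g h : Equiv.Perm (Vert (ZMod p))} {c d : ZMod p}
    (hg : TrC p g c) (hh : TrC p h d) : TrC p (g * h) (c + d) := fun y => by
  rw [Equiv.Perm.mul_apply, hh, hg, add_assoc, add_comm d c]

lemma TrC_inv {g : Equiv.Perm (Vert (ZMod p))} {c : ZMod p}
    (hg : TrC p g c) : TrC p g⁻¹ (-c) := by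
  intro y
  apply g.injective
  rw [show g (g⁻¹ [y]) = [y] from g.apply_symm_apply [y], hg]
  simp

lemma TrC_pow {g : Equiv.Perm (Vert (ZMod p))} {c : ZMod p} (hg : TrC p g c) (k : ℕ) :
    TrC p (g ^ k) ((k : ZMod p) * c) := by
  induction k with
  | zero => simpa using TrC_one
  | succ n ih =>
    have h : ((n + 1 : ℕ) : ZMod p) * c = (n : ZMod p) * c + c := by push_cast; ring
    rw [pow_succ, h]
    exact TrC_mul ih hg

lemma TrC_a : TrC p (aPerm p) 1 := fun y => rfl

lemma TrC_b : TrC p (bPerm p e) 0 := by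
  intro y
  rw [add_zero, bPerm_cons]
  split
  · rw [aPerm_pow_nil]
  · rw [bPerm_nil']

/-- Every element of the GGS group translates level one. -/
lemma GGS_trc {g : Equiv.Perm (Vert (ZMod p))} (hg : g ∈ GGSGroup p e) :
    ∃ c, TrC p g c := by
  let T : Subgroup (Equiv.Perm (Vert (ZMod p))) :=
    { carrier := { g | ∃ c, TrC p g c }
      one_mem' := ⟨0, TrC_one⟩
      mul_mem' := fun ⟨c, hc⟩ ⟨d, hd⟩ => ⟨c + d, TrC_mul hc hd⟩
      inv_mem' := fun ⟨c, hc⟩ => ⟨-c, TrC_inv hc⟩ }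
  have hle : GGSGroup p e ≤ T := by
    rw [GGSGroup, Subgroup.closure_le]
    rintro g (rfl | rfl)
    · exact ⟨1, TrC_a⟩
    · exact ⟨0, TrC_b⟩
  exact hle hg

lemma derived_trc {d : Equiv.Perm (Vert (ZMod p))} (hd : d ∈ GGSDerived p e) :
    TrC p d 0 := by
  rw [GGSDerived, Subgroup.mem_map] at hd
  obtain ⟨u, hu, rfl⟩ := hd
  let Z : Subgroup ↥(GGSGroup p e) :=
    { carrier := { u | TrC p u.1 0 }
      one_mem' := TrC_one
      mul_mem' := fun {a b} ha hb => by
        have := TrC_mul ha hb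
        simpa using this
      inv_mem' := fun {a} ha => by
        have := TrC_inv ha
        simpa using this }
  have hle : commutator ↥(GGSGroup p e) ≤ Z := by
    rw [commutator_def, Subgroup.commutator_le]
    intro g _ h _
    obtain ⟨c, hc⟩ := GGS_trc g.2
    obtain ⟨c', hc'⟩ := GGS_trc h.2
    rw [commutatorElement_def]
    show TrC p (g.1 * h.1 * g.1⁻¹ * h.1⁻¹) 0
    have := TrC_mul (TrC_mul (TrC_mul hc hc') (TrC_inv hc)) (TrC_inv hc')
    have heq : c + c' + -c + -c' = 0 := by ring
    rwa [heq] at this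
  exact hle hu

lemma isAlphaBeta_trc {g : Equiv.Perm (Vert (ZMod p))} {α β : ℕ}
    (h : IsAlphaBeta p e g α β) : TrC p g (α : ZMod p) := by
  obtain ⟨hα, hβ, hd⟩ := h
  have h1 : TrC p ((aPerm p ^ α * bPerm p e ^ β)⁻¹ * g) 0 := derived_trc hd
  have h2 : TrC p (aPerm p ^ α * bPerm p e ^ β) ((α : ZMod p)) := by
    have := TrC_mul (TrC_pow TrC_a α) (TrC_pow (TrC_b (e := e)) β)
    simpa using this
  have h3 := TrC_mul h2 h1
  rw [mul_inv_cancel_left] at h3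
  simpa using h3

lemma exists_isAlphaBeta (hp : p.Prime) {g : Equiv.Perm (Vert (ZMod p))}
    (hg : g ∈ GGSGroup p e) : ∃ α β : ℕ, IsAlphaBeta p e g α β := by
  have hp0 : 0 < p := hp.pos
  have haG : aPerm p ∈ GGSGroup p e := Subgroup.subset_closure (by simp)
  have hbG : bPerm p e ∈ GGSGroup p e := Subgroup.subset_closure (by simp)
  set aa : ↥(GGSGroup p e) := ⟨aPerm p, haG⟩ with haa
  set bb : ↥(GGSGroup p e) := ⟨bPerm p e, hbG⟩ with hbb
  set q := (Abelianization.of : ↥(GGSGroup p e) →* Abelianization ↥(GGSGroup p e)) with hq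
  have hqa : q aa ^ p = 1 := by
    rw [← map_pow]
    have : aa ^ p = 1 := by
      apply Subtype.ext
      rw [SubgroupClass.coe_pow, OneMemClass.coe_one]
      exact aPerm_pow_p hp0
    rw [this, map_one]
  have hqb : q bb ^ p = 1 := by
    rw [← map_pow]
    have : bb ^ p = 1 := by
      apply Subtype.ext
      rw [SubgroupClass.coe_pow, OneMemClass.coe_one]
      exact bPerm_pow_p hp0
    rw [this, map_one]
  have hmodpow : ∀ t : Abelianization ↥(GGSGroup p e), t ^ p = 1 → ∀ m : ℕ,
      t ^ m = t ^ (m % p) := by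
    intro t ht m
    conv_lhs => rw [← Nat.div_add_mod m p]
    rw [pow_add, pow_mul, ht, one_pow, one_mul]
  have hgen : ∀ u : ↥(GGSGroup p e), ∃ α β : ℕ, α < p ∧ β < p ∧
      q u = q aa ^ α * q bb ^ β := by
    intro u
    have htop : Subgroup.closure
        ((GGSGroup p e).subtype ⁻¹' {aPerm p, bPerm p e}) = ⊤ :=
      Subgroup.closure_preimage_eq_top _
    have hset : ((GGSGroup p e).subtype ⁻¹' {aPerm p, bPerm p e} :
        Set ↥(GGSGroup p e)) = {aa, bb} := by
      ext u
      simp [Subgroup.coe_subtype, Subtype.ext_iff, haa, hbb]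
    rw [hset] at htop
    have hu : u ∈ Subgroup.closure ({aa, bb} : Set ↥(GGSGroup p e)) := by
      rw [htop]; trivial
    refine Subgroup.closure_induction ?_ ?_ ?_ ?_ hu
    · rintro v (rfl | rfl)
      · exact ⟨1, 0, hp.one_lt, hp0, by simp⟩
      · exact ⟨0, 1, hp0, hp.one_lt, by simp⟩
    · exact ⟨0, 0, hp0, hp0, by simp⟩
    · rintro v w _ _ ⟨α₁, β₁, _, _, h1⟩ ⟨α₂, β₂, _, _, h2⟩
      refine ⟨(α₁ + α₂) % p, (β₁ + β₂) % p, Nat.mod_lt _ hp0, Nat.mod_lt _ hp0, ?_⟩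
      rw [map_mul, h1, h2, mul_mul_mul_comm, ← pow_add, ← pow_add,
        hmodpow _ hqa, hmodpow _ hqb]
    · rintro v _ ⟨α, β, hα, hβ, h1⟩
      have e1 : ∀ a, a < p → (a + (p - a) % p) % p = 0 := by
        intro a ha
        rw [Nat.add_mod_mod, Nat.add_sub_cancel' ha.le, Nat.mod_self]
      refine ⟨(p - α) % p, (p - β) % p, Nat.mod_lt _ hp0, Nat.mod_lt _ hp0, ?_⟩
      rw [map_inv, h1]
      refine inv_eq_of_mul_eq_one_right ?_
      rw [mul_mul_mul_comm, ← pow_add, ← pow_add, hmodpow _ hqa, hmodpow _ hqb,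
        e1 α hα, e1 β hβ, pow_zero, pow_zero, one_mul]
  obtain ⟨α, β, hα, hβ, hqu⟩ := hgen ⟨g, hg⟩
  refine ⟨α, β, hα, hβ, ?_⟩
  have hv : q ((aa ^ α * bb ^ β)⁻¹ * ⟨g, hg⟩) = 1 := by
    rw [map_mul, map_inv, map_mul, map_pow, map_pow, hqu]
    group
  have hmem : (aa ^ α * bb ^ β)⁻¹ * (⟨g, hg⟩ : ↥(GGSGroup p e)) ∈
      commutator ↥(GGSGroup p e) := (QuotientGroup.eq_one_iff _).mp hv
  rw [GGSDerived, Subgroup.mem_map]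
  exact ⟨_, hmem, by simp [haa, hbb]⟩

end AuxGGS
/-- Lemma 4.4: for a type III subgroup `H` of a torsion GGS group generated by `S`,
and `x ∈ S` with `α_x ≠ 0`, the set
`S' = {x^{k₁} y x^{k₂} : y ∈ S, k₁,k₂ ∈ {0,…,p-1}, k₁α_x + α_y + k₂α_x ≡ 0 mod p}`
generates `Stab_H(L_1)`. -/
theorem statement11 (p : ℕ) (hp : p.Prime) (hodd : Odd p)
    (e : Fin (p - 1) → ZMod p) (he : e ≠ 0)
    (htor : ∀ g ∈ GGSGroup p e, IsOfFinOrder g)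
    (H : Subgroup (Equiv.Perm (Vert (ZMod p)))) (hH : H ≤ GGSGroup p e)
    (hIII : TypeIII p e H)
    (S : Set (Equiv.Perm (Vert (ZMod p)))) (hSgen : Subgroup.closure S = H)
    (x : Equiv.Perm (Vert (ZMod p))) (hxS : x ∈ S)
    (αx βx : ℕ) (hx : IsAlphaBeta p e x αx βx) (hαx : αx ≠ 0) :
    Subgroup.closure { g : Equiv.Perm (Vert (ZMod p)) |
        ∃ y ∈ S, ∃ k₁ k₂ : ℕ, k₁ < p ∧ k₂ < p ∧
          (∃ αy βy : ℕ, IsAlphaBeta p e y αy βy ∧ (k₁ * αx + αy + k₂ * αx) % p = 0) ∧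
          g = x ^ k₁ * y * x ^ k₂ } =
      stabSet H (level (ZMod p) 1) := by
  classical
  have hp0 : 0 < p := hp.pos
  haveI : NeZero p := ⟨hp.ne_zero⟩
  haveI : Fact p.Prime := ⟨hp⟩
  have hxH : x ∈ H := by rw [← hSgen]; exact Subgroup.subset_closure hxS
  have hxG : x ∈ GGSGroup p e := hH hxH
  have hTrx : TrC p x (αx : ZMod p) := isAlphaBeta_trc hx
  have hAne : (αx : ZMod p) ≠ 0 := by
    rw [Ne, ZMod.natCast_eq_zero_iff]
    intro hdvd
    exact absurd (Nat.le_of_dvd (Nat.pos_of_ne_zero hαx) hdvd) (not_le.mpr hx.1)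
  set SP : Set (Equiv.Perm (Vert (ZMod p))) := { g : Equiv.Perm (Vert (ZMod p)) |
        ∃ y ∈ S, ∃ k₁ k₂ : ℕ, k₁ < p ∧ k₂ < p ∧
          (∃ αy βy : ℕ, IsAlphaBeta p e y αy βy ∧ (k₁ * αx + αy + k₂ * αx) % p = 0) ∧
          g = x ^ k₁ * y * x ^ k₂ } with hSP
  set N := Subgroup.closure SP with hN
  have hxpN : x ^ p ∈ N := by
    apply Subgroup.subset_closure
    refine ⟨x, hxS, p - 1, 0, by omega, hp0, ⟨αx, βx, hx, ?_⟩, ?_⟩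
    · have h1 : (p - 1) * αx + αx + 0 * αx = p * αx := by
        have h2 : p - 1 + 1 = p := by omega
        calc (p - 1) * αx + αx + 0 * αx = (p - 1 + 1) * αx := by ring
        _ = p * αx := by rw [h2]
      rw [h1, Nat.mul_mod_right]
    · rw [pow_zero, mul_one, ← pow_succ]
      congr 1
      omega
  have hpow_dvd : ∀ m : ℕ, p ∣ m → x ^ m ∈ N := by
    rintro m ⟨t, rfl⟩
    rw [pow_mul]
    exact Subgroup.pow_mem N hxpN t
  have hsur : ∀ z : ZMod p, ∃ j : ℕ, (j : ZMod p) = z := fun z =>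
    ⟨z.val, ZMod.natCast_rightInverse z⟩
  have hcast0 : ∀ n : ℕ, ((n : ZMod p) = 0) → p ∣ n := fun n h =>
    (ZMod.natCast_eq_zero_iff n p).mp h
  have key : ∀ h ∈ Subgroup.closure S, (∃ c, TrC p h c) ∧
      ∀ c, TrC p h c → ∀ k m : ℕ,
        ((k : ZMod p) + (m : ZMod p)) * (αx : ZMod p) + c = 0 → x ^ k * h * x ^ m ∈ N := by
    intro h hmem
    refine Subgroup.closure_induction ?_ ?_ ?_ ?_ hmem
    · intro y hy
      have hyG : y ∈ GGSGroup p e := hH (by rw [← hSgen]; exact Subgroup.subset_closure hy)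
      obtain ⟨αy, βy, hyab⟩ := exists_isAlphaBeta hp hyG
      have hTry : TrC p y (αy : ZMod p) := isAlphaBeta_trc hyab
      refine ⟨⟨_, hTry⟩, ?_⟩
      intro c hc k m hcond
      have hceq : c = (αy : ZMod p) := TrC_unique hc hTry
      rw [hceq] at hcond
      have hmid : x ^ (k % p) * y * x ^ (m % p) ∈ N := by
        apply Subgroup.subset_closure
        refine ⟨y, hy, k % p, m % p, Nat.mod_lt _ hp0, Nat.mod_lt _ hp0,
          ⟨αy, βy, hyab, ?_⟩, rfl⟩
        have hz : (((k % p) * αx + αy + (m % p) * αx : ℕ) : ZMod p) = 0 := by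
          push_cast [ZMod.natCast_mod]
          linear_combination hcond
        obtain ⟨t, ht⟩ := hcast0 _ hz
        rw [ht, Nat.mul_mod_right]
      have heq : x ^ k * y * x ^ m
          = x ^ (p * (k / p)) * (x ^ (k % p) * y * (x ^ (m % p) * x ^ (p * (m / p)))) := by
        have hk : x ^ k = x ^ (p * (k / p)) * x ^ (k % p) := by
          rw [← pow_add]; congr 1; exact (Nat.div_add_mod k p).symm
        have hm : x ^ m = x ^ (m % p) * x ^ (p * (m / p)) := by
          rw [← pow_add]; congr 1; exact (Nat.mod_add_div m p).symm
        rw [hk, hm]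
        simp only [mul_assoc]
      rw [heq]
      refine N.mul_mem (hpow_dvd _ ⟨k / p, rfl⟩) ?_
      have h3 : x ^ (k % p) * y * (x ^ (m % p) * x ^ (p * (m / p)))
          = x ^ (k % p) * y * x ^ (m % p) * x ^ (p * (m / p)) := by
        simp only [mul_assoc]
      rw [h3]
      exact N.mul_mem hmid (hpow_dvd _ ⟨m / p, rfl⟩)
    · refine ⟨⟨0, TrC_one⟩, ?_⟩
      intro c hc k m hcond
      have hc0 : c = 0 := TrC_unique hc TrC_one
      rw [hc0, add_zero, mul_eq_zero] at hcond
      have hkm : ((k + m : ℕ) : ZMod p) = 0 := by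
        rcases hcond with h | h
        · push_cast; exact h
        · exact absurd h hAne
      have h1 : x ^ k * 1 * x ^ m = x ^ (k + m) := by rw [mul_one, pow_add]
      rw [h1]
      exact hpow_dvd _ (hcast0 _ hkm)
    · rintro g g' _ _ ⟨⟨c₁, hc₁⟩, H₁⟩ ⟨⟨c₂, hc₂⟩, H₂⟩
      refine ⟨⟨c₁ + c₂, TrC_mul hc₁ hc₂⟩, ?_⟩
      intro c hc k m hcond
      have hce : c = c₁ + c₂ := TrC_unique hc (TrC_mul hc₁ hc₂)
      rw [hce] at hcond
      obtain ⟨j, hj⟩ := hsur ((αx : ZMod p)⁻¹ * (-((k : ZMod p) * αx + c₁)))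
      obtain ⟨l, hl⟩ := hsur (-(j : ZMod p))
      have hjcond : ((k : ZMod p) + (j : ZMod p)) * (αx : ZMod p) + c₁ = 0 := by
        rw [hj]
        field_simp
        ring
      have hlcond : ((l : ZMod p) + (m : ZMod p)) * (αx : ZMod p) + c₂ = 0 := by
        rw [hl]
        linear_combination hcond - hjcond
      have h1 : x ^ k * g * x ^ j ∈ N := H₁ c₁ hc₁ k j hjcond
      have h2 : x ^ l * g' * x ^ m ∈ N := H₂ c₂ hc₂ l m hlcond
      have hjl : p ∣ j + l := by
        apply hcast0
        push_cast
        rw [hl]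
        ring
      have hmid1 : x ^ j * (x ^ (j + l))⁻¹ * x ^ l = 1 := by
        rw [mul_assoc, (((Commute.refl x).pow_pow (j + l) l).inv_left).eq,
          ← mul_assoc, ← pow_add]
        simp
      have heq : x ^ k * (g * g') * x ^ m
          = x ^ k * g * x ^ j * (x ^ (j + l))⁻¹ * (x ^ l * g' * x ^ m) := by
        have h3 : x ^ k * g * x ^ j * (x ^ (j + l))⁻¹ * (x ^ l * g' * x ^ m)
            = x ^ k * (g * (x ^ j * (x ^ (j + l))⁻¹ * x ^ l * (g' * x ^ m))) := by
          simp only [mul_assoc]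
        rw [h3, hmid1, one_mul]
        simp only [mul_assoc]
      rw [heq]
      exact N.mul_mem (N.mul_mem h1 (N.inv_mem (hpow_dvd _ hjl))) h2
    · rintro g _ ⟨⟨c₁, hc₁⟩, H₁⟩
      refine ⟨⟨-c₁, TrC_inv hc₁⟩, ?_⟩
      intro c hc k m hcond
      have hce : c = -c₁ := TrC_unique hc (TrC_inv hc₁)
      rw [hce] at hcond
      obtain ⟨j, hj⟩ := hsur (-(m : ZMod p))
      obtain ⟨l, hl⟩ := hsur (-(k : ZMod p))
      have hjlcond : ((j : ZMod p) + (l : ZMod p)) * (αx : ZMod p) + c₁ = 0 := by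
        rw [hj, hl]
        linear_combination -hcond
      have hw : x ^ j * g * x ^ l ∈ N := H₁ c₁ hc₁ j l hjlcond
      have hkl : p ∣ k + l := by apply hcast0; push_cast; rw [hl]; ring
      have hjm : p ∣ j + m := by apply hcast0; push_cast; rw [hj]; ring
      have heq : x ^ k * g⁻¹ * x ^ m
          = x ^ (k + l) * (x ^ j * g * x ^ l)⁻¹ * x ^ (j + m) := by
        rw [mul_inv_rev, mul_inv_rev, pow_add, pow_add]
        simp only [mul_assoc, mul_inv_cancel_left, inv_mul_cancel_left]
      rw [heq]
      exact N.mul_mem (N.mul_mem (hpow_dvd _ hkl) (N.inv_mem hw)) (hpow_dvd _ hjm)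
  apply le_antisymm
  · rw [hN, Subgroup.closure_le]
    rintro g ⟨y, hyS, k₁, k₂, hk₁, hk₂, ⟨αy, βy, hyab, hmod⟩, rfl⟩
    have hyH : y ∈ H := by rw [← hSgen]; exact Subgroup.subset_closure hyS
    have hTry : TrC p y (αy : ZMod p) := isAlphaBeta_trc hyab
    have hTr : TrC p (x ^ k₁ * y * x ^ k₂)
        ((k₁ : ZMod p) * αx + αy + (k₂ : ZMod p) * αx) :=
      TrC_mul (TrC_mul (TrC_pow hTrx k₁) hTry) (TrC_pow hTrx k₂)
    have h0 : ((k₁ : ZMod p) * αx + αy + (k₂ : ZMod p) * αx) = 0 := by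
      have h1 : (((k₁ * αx + αy + k₂ * αx : ℕ)) : ZMod p) = 0 := by
        rw [ZMod.natCast_eq_zero_iff]
        exact Nat.dvd_of_mod_eq_zero hmod
      push_cast at h1
      linear_combination h1
    rw [h0] at hTr
    refine ⟨H.mul_mem (H.mul_mem (H.pow_mem hxH k₁) hyH) (H.pow_mem hxH k₂), ?_⟩
    intro v hv
    obtain ⟨y₀, rfl⟩ := List.length_eq_one_iff.mp hv
    have h2 := hTr y₀
    rwa [add_zero] at h2
  · intro h hh
    have hhH : h ∈ H := hh.1
    have hfix := hh.2
    have hmem : h ∈ Subgroup.closure S := by rw [hSgen]; exact hhH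
    obtain ⟨⟨c, hc⟩, Hh⟩ := key h hmem
    have hc0 : c = 0 := by
      have h1 := hc 0
      have h2 : h [(0 : ZMod p)] = [(0 : ZMod p)] := hfix _ rfl
      rw [h2] at h1
      simpa using h1.symm
    rw [hc0] at hc
    have h3 := Hh 0 hc 0 0 (by simp)
    simpa using h3
end

section
/- Let G be a torsion GGS group and H < G a subgroup generated by elements of b-length at most 1. Then for every vertex v of the tree, the subgroup φ_v(Stab_H(v)) is generated by elements of b-length at most 1. -/
theorem Equiv.Perm.apply_inv_self {α : Type*} (f : Equiv.Perm α) (x : α) : f (f⁻¹ x) = x :=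
  f.apply_symm_apply x

theorem Equiv.Perm.inv_apply_self {α : Type*} (f : Equiv.Perm α) (x : α) : f⁻¹ (f x) = x :=
  f.symm_apply_apply x

namespace GGSAux

open Equiv

variable {p : ℕ} {e : Fin (p - 1) → ZMod p}

/-! ### Basic action lemmas for `aPerm` and `bPerm` -/

lemma aPerm_nil : aPerm p [] = [] := rfl

lemma aPerm_cons (x : ZMod p) (w : Vert (ZMod p)) : aPerm p (x :: w) = (x + 1) :: w := rfl

lemma aPerm_inv_cons (x : ZMod p) (w : Vert (ZMod p)) :
    (aPerm p)⁻¹ (x :: w) = (x - 1) :: w := rfl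

lemma aPerm_inv_nil : (aPerm p)⁻¹ [] = [] := rfl

lemma aPerm_zpow_nil (i : ℤ) : (aPerm p ^ i) [] = [] := by
  induction i using Int.induction_on with
  | zero => simp
  | succ n ih => rw [zpow_add_one, Equiv.Perm.mul_apply, aPerm_nil, ih]
  | pred n ih => rw [zpow_sub_one, Equiv.Perm.mul_apply, aPerm_inv_nil, ih]

lemma aPerm_zpow_cons (i : ℤ) (x : ZMod p) (w : Vert (ZMod p)) :
    (aPerm p ^ i) (x :: w) = (x + i) :: w := by
  induction i using Int.induction_on generalizing x with
  | zero => simp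
  | succ n ih =>
      rw [zpow_add_one, Equiv.Perm.mul_apply, aPerm_cons, ih]
      push_cast; ring_nf
  | pred n ih =>
      rw [zpow_sub_one, Equiv.Perm.mul_apply, aPerm_inv_cons, ih]
      push_cast; ring_nf

lemma aPerm_pow_nil (n : ℕ) : (aPerm p ^ n) [] = [] := by
  rw [← zpow_natCast]; exact aPerm_zpow_nil n

lemma aPerm_pow_cons (n : ℕ) (x : ZMod p) (w : Vert (ZMod p)) :
    (aPerm p ^ n) (x :: w) = (x + n) :: w := by
  rw [← zpow_natCast, aPerm_zpow_cons]; push_cast; ring_nf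

lemma bPerm_nil : bPerm p e [] = [] := rfl

lemma bPerm_cons_lt {x : ZMod p} (h : x.val < p - 1) (w : Vert (ZMod p)) :
    bPerm p e (x :: w) = x :: (aPerm p ^ (e ⟨x.val, h⟩).val) w := by
  show bFun p e (x :: w) = _
  rw [bFun, dif_pos h]

lemma bPerm_cons_ge {x : ZMod p} (h : ¬ x.val < p - 1) (w : Vert (ZMod p)) :
    bPerm p e (x :: w) = x :: bPerm p e w := by
  show bFun p e (x :: w) = _
  rw [bFun, dif_neg h]
  rfl

lemma bPerm_single (y : ZMod p) : bPerm p e [y] = [y] := by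
  by_cases h : y.val < p - 1
  · rw [bPerm_cons_lt h, aPerm_pow_nil]
  · rw [bPerm_cons_ge h, bPerm_nil]

lemma bPerm_zpow_single (j : ℤ) (y : ZMod p) : (bPerm p e ^ j) [y] = [y] := by
  induction j using Int.induction_on with
  | zero => simp
  | succ n ih => rw [zpow_add_one, Equiv.Perm.mul_apply, bPerm_single, ih]
  | pred n ih =>
      have hinv : (bPerm p e)⁻¹ [y] = [y] := by
        conv_lhs => rw [← bPerm_single (e := e) y]
        exact Equiv.Perm.inv_apply_self _ _
      rw [zpow_sub_one, Equiv.Perm.mul_apply, hinv, ih]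

end GGSAux
namespace GGSAux

variable {p : ℕ} {e : Fin (p - 1) → ZMod p}

/-! ### `Good` automorphisms and their sections -/

/-- A permutation all of whose sections exist. -/
def Good {A : Type*} (g : Equiv.Perm (Vert A)) : Prop :=
  ∀ v : Vert A, ∃ s : Equiv.Perm (Vert A), ∀ w : Vert A, g (v ++ w) = g v ++ s w

lemma sect_spec {A : Type*} {g : Equiv.Perm (Vert A)} (hg : Good g) (v w : Vert A) :
    g (v ++ w) = g v ++ sect g v w := by
  classical
  unfold sect
  rw [dif_pos (hg v)]
  exact (hg v).choose_spec w

lemma sect_unique {A : Type*} {g s : Equiv.Perm (Vert A)} {v : Vert A} (hg : Good g)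
    (hs : ∀ w, g (v ++ w) = g v ++ s w) : sect g v = s := by
  refine Equiv.ext fun w => ?_
  have h1 := sect_spec hg v w
  have h2 := hs w
  rw [h1] at h2
  exact List.append_cancel_left h2

lemma Good.one {A : Type*} : Good (1 : Equiv.Perm (Vert A)) :=
  fun _ => ⟨1, fun _ => rfl⟩

lemma Good.mul {A : Type*} {g h : Equiv.Perm (Vert A)} (hg : Good g) (hh : Good h) :
    Good (g * h) := by
  intro v
  obtain ⟨sh, hsh⟩ := hh v
  obtain ⟨sg, hsg⟩ := hg (h v)
  exact ⟨sg * sh, fun w => by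
    simp only [Equiv.Perm.mul_apply, hsh, hsg]⟩

lemma Good.inv {A : Type*} {g : Equiv.Perm (Vert A)} (hg : Good g) : Good g⁻¹ := by
  intro v
  obtain ⟨s, hs⟩ := hg (g⁻¹ v)
  refine ⟨s⁻¹, fun w => ?_⟩
  have h1 := hs (s⁻¹ w)
  rw [Equiv.Perm.apply_inv_self, Equiv.Perm.apply_inv_self] at h1
  rw [← h1, Equiv.Perm.inv_apply_self]

lemma Good.pow {A : Type*} {g : Equiv.Perm (Vert A)} (hg : Good g) (n : ℕ) : Good (g ^ n) := by
  induction n with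
  | zero => simpa using Good.one
  | succ n ih => rw [pow_succ]; exact ih.mul hg

lemma Good.zpow {A : Type*} {g : Equiv.Perm (Vert A)} (hg : Good g) (i : ℤ) : Good (g ^ i) := by
  cases i with
  | ofNat n => simpa using hg.pow n
  | negSucc n => rw [zpow_negSucc]; exact (hg.pow (n + 1)).inv

lemma sect_one {A : Type*} (v : Vert A) : sect (1 : Equiv.Perm (Vert A)) v = 1 :=
  sect_unique Good.one (fun _ => rfl)

lemma sect_mul {A : Type*} {g h : Equiv.Perm (Vert A)} (hg : Good g) (hh : Good h)
    (v : Vert A) : sect (g * h) v = sect g (h v) * sect h v := by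
  refine sect_unique (hg.mul hh) (fun w => ?_)
  simp only [Equiv.Perm.mul_apply]
  rw [sect_spec hh v w, sect_spec hg (h v)]

lemma sect_inv {A : Type*} {g : Equiv.Perm (Vert A)} (hg : Good g) (v : Vert A) :
    sect g⁻¹ v = (sect g (g⁻¹ v))⁻¹ := by
  refine sect_unique hg.inv (fun w => ?_)
  have h1 := sect_spec hg (g⁻¹ v) ((sect g (g⁻¹ v))⁻¹ w)
  rw [Equiv.Perm.apply_inv_self, Equiv.Perm.apply_inv_self] at h1
  rw [← h1, Equiv.Perm.inv_apply_self]

lemma Good.sect {A : Type*} {g : Equiv.Perm (Vert A)} (hg : Good g) (u : Vert A) :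
    Good (_root_.sect g u) := by
  intro v
  refine ⟨_root_.sect g (u ++ v), fun w => ?_⟩
  have h1 := sect_spec hg u (v ++ w)
  have h2 := sect_spec hg (u ++ v) w
  have h3 := sect_spec hg u v
  rw [← List.append_assoc] at h1
  rw [h2, h3, List.append_assoc] at h1
  exact (List.append_cancel_left h1).symm

lemma sect_append {A : Type*} {g : Equiv.Perm (Vert A)} (hg : Good g) (u v : Vert A) :
    sect g (u ++ v) = sect (sect g u) v := by
  refine (sect_unique (hg.sect u) (fun w => ?_)).symm
  have h1 := sect_spec hg u (v ++ w)
  have h2 := sect_spec hg (u ++ v) w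
  have h3 := sect_spec hg u v
  rw [← List.append_assoc] at h1
  rw [h2, h3, List.append_assoc] at h1
  exact (List.append_cancel_left h1).symm

/-! ### Goodness and sections of the generators -/

lemma good_aPerm : Good (aPerm p) := by
  rintro (_ | ⟨x, v⟩)
  · exact ⟨aPerm p, fun w => rfl⟩
  · exact ⟨1, fun w => by simp [aPerm_cons]⟩

lemma good_bPerm : Good (bPerm p e) := by
  intro v
  induction v with
  | nil => exact ⟨bPerm p e, fun w => by rw [List.nil_append, bPerm_nil, List.nil_append]⟩
  | cons x v ih =>
      by_cases h : x.val < p - 1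
      · obtain ⟨s, hs⟩ := (good_aPerm.pow (e ⟨x.val, h⟩).val) v
        refine ⟨s, fun w => ?_⟩
        rw [List.cons_append, bPerm_cons_lt h, bPerm_cons_lt h, hs, List.cons_append]
      · obtain ⟨s, hs⟩ := ih
        refine ⟨s, fun w => ?_⟩
        rw [List.cons_append, bPerm_cons_ge h, bPerm_cons_ge h, hs, List.cons_append]

lemma sect_aPerm_zpow_single (i : ℤ) (y : ZMod p) : sect (aPerm p ^ i) [y] = 1 := by
  refine sect_unique (good_aPerm.zpow i) (fun w => ?_)
  rw [List.singleton_append, aPerm_zpow_cons, Equiv.Perm.one_apply, aPerm_zpow_cons]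
  rfl

lemma sect_bPerm_single_lt {y : ZMod p} (h : y.val < p - 1) :
    sect (bPerm p e) [y] = aPerm p ^ (e ⟨y.val, h⟩).val := by
  refine sect_unique good_bPerm (fun w => ?_)
  rw [List.singleton_append, bPerm_cons_lt h, bPerm_single]
  rfl

lemma sect_bPerm_single_ge {y : ZMod p} (h : ¬ y.val < p - 1) :
    sect (bPerm p e) [y] = bPerm p e := by
  refine sect_unique good_bPerm (fun w => ?_)
  rw [List.singleton_append, bPerm_cons_ge h, bPerm_single]
  rfl

lemma sect_bPerm_zpow_single (j : ℤ) (y : ZMod p) :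
    sect (bPerm p e ^ j) [y] = (sect (bPerm p e) [y]) ^ j := by
  induction j using Int.induction_on with
  | zero => simpa using sect_one _
  | succ n ih =>
      rw [zpow_add_one, sect_mul (good_bPerm.zpow n) good_bPerm, bPerm_single, ih,
        zpow_add_one]
  | pred n ih =>
      have hinv : (bPerm p e)⁻¹ [y] = [y] := by
        conv_lhs => rw [← bPerm_single (e := e) y]
        exact Equiv.Perm.inv_apply_self _ _
      rw [zpow_sub_one, sect_mul (good_bPerm.zpow (-n)) good_bPerm.inv, hinv, ih,
        sect_inv good_bPerm, hinv, zpow_sub_one]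

end GGSAux
namespace GGSAux

variable {p : ℕ} {e : Fin (p - 1) → ZMod p}

/-! ### The level-one exponent -/

/-- The first-level exponent of a tree automorphism. -/
noncomputable def F (p : ℕ) (g : Equiv.Perm (Vert (ZMod p))) : ZMod p :=
  (g [(0 : ZMod p)]).headI

/-- Elements of the GGS group are good, fix the root, and act on level one by a
rotation. -/
def Nice (p : ℕ) (g : Equiv.Perm (Vert (ZMod p))) : Prop :=
  Good g ∧ g [] = [] ∧ ∀ y : ZMod p, g [y] = [y + F p g]

lemma nice_of_shift {g : Equiv.Perm (Vert (ZMod p))} (hg : Good g) (h0 : g [] = [])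
    {c : ZMod p} (hc : ∀ y : ZMod p, g [y] = [y + c]) : Nice p g := by
  have hF : F p g = c := by rw [F, hc 0, zero_add]; rfl
  exact ⟨hg, h0, fun y => by rw [hc y, hF]⟩

lemma Nice.good {g : Equiv.Perm (Vert (ZMod p))} (hg : Nice p g) : Good g := hg.1

lemma nice_one : Nice p (1 : Equiv.Perm (Vert (ZMod p))) :=
  nice_of_shift Good.one rfl (c := 0) (fun y => by simp)

lemma Nice.mul {g h : Equiv.Perm (Vert (ZMod p))} (hg : Nice p g) (hh : Nice p h) :
    Nice p (g * h) := by
  refine nice_of_shift (hg.1.mul hh.1) ?_ (c := F p h + F p g) (fun y => ?_)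
  · rw [Equiv.Perm.mul_apply, hh.2.1, hg.2.1]
  · rw [Equiv.Perm.mul_apply, hh.2.2, hg.2.2, add_assoc]

lemma Nice.inv {g : Equiv.Perm (Vert (ZMod p))} (hg : Nice p g) : Nice p g⁻¹ := by
  refine nice_of_shift hg.1.inv ?_ (c := - F p g) (fun y => ?_)
  · conv_lhs => rw [← hg.2.1]
    exact Equiv.Perm.inv_apply_self _ _
  · have := hg.2.2 (y - F p g)
    rw [sub_add_cancel] at this
    rw [← this, Equiv.Perm.inv_apply_self, sub_eq_add_neg]

lemma F_one : F p (1 : Equiv.Perm (Vert (ZMod p))) = 0 := by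
  rw [F]; rfl

lemma F_shift {g : Equiv.Perm (Vert (ZMod p))} (hg : Nice p g) (y : ZMod p) :
    g [y] = [y + F p g] := hg.2.2 y

lemma F_mul {g h : Equiv.Perm (Vert (ZMod p))} (hg : Nice p g) (hh : Nice p h) :
    F p (g * h) = F p g + F p h := by
  have h1 := F_shift (hg.mul hh) 0
  rw [Equiv.Perm.mul_apply, F_shift hh 0, F_shift hg] at h1
  have := List.head_eq_of_cons_eq h1
  rw [zero_add, zero_add] at this
  rw [← this]; ring

lemma F_inv {g : Equiv.Perm (Vert (ZMod p))} (hg : Nice p g) : F p g⁻¹ = - F p g := by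
  have h1 := F_mul hg hg.inv
  rw [mul_inv_cancel, F_one] at h1
  linear_combination -h1

lemma nice_aPerm : Nice p (aPerm p) :=
  nice_of_shift good_aPerm rfl (c := 1) (fun y => by rw [aPerm_cons])

lemma nice_bPerm : Nice p (bPerm p e) :=
  nice_of_shift good_bPerm rfl (c := 0) (fun y => by rw [bPerm_single, add_zero])

lemma Nice.zpow {g : Equiv.Perm (Vert (ZMod p))} (hg : Nice p g) (i : ℤ) :
    Nice p (g ^ i) := by
  induction i using Int.induction_on with
  | zero => simpa using nice_one
  | succ n ih => rw [zpow_add_one]; exact ih.mul hg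
  | pred n ih => rw [zpow_sub_one]; exact ih.mul hg.inv

lemma F_zpow {g : Equiv.Perm (Vert (ZMod p))} (hg : Nice p g) (i : ℤ) :
    F p (g ^ i) = (i : ZMod p) * F p g := by
  induction i using Int.induction_on with
  | zero => simpa using F_one
  | succ n ih =>
      rw [zpow_add_one, F_mul (hg.zpow n) hg, ih]
      push_cast; ring
  | pred n ih =>
      rw [zpow_sub_one, F_mul (hg.zpow (-n)) hg.inv, ih, F_inv hg]
      push_cast; ring

lemma nice_of_mem {g : Equiv.Perm (Vert (ZMod p))} (hg : g ∈ GGSGroup p e) :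
    Nice p g := by
  induction hg using Subgroup.closure_induction with
  | mem x hx =>
      rcases hx with hx | hx
      · rw [hx]; exact nice_aPerm
      · rw [Set.mem_singleton_iff] at hx; rw [hx]; exact nice_bPerm
  | one => exact nice_one
  | mul x y _ _ ihx ihy => exact ihx.mul ihy
  | inv x _ ih => exact ih.inv

lemma aPerm_mem : aPerm p ∈ GGSGroup p e :=
  Subgroup.subset_closure (Set.mem_insert _ _)

lemma bPerm_mem : bPerm p e ∈ GGSGroup p e :=
  Subgroup.subset_closure (Set.mem_insert_of_mem _ rfl)

/-- Elements writable as `a^i b^j a^k`. -/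
def Shape (p : ℕ) (e : Fin (p - 1) → ZMod p) (g : Equiv.Perm (Vert (ZMod p))) : Prop :=
  ∃ i j k : ℤ, g = aPerm p ^ i * bPerm p e ^ j * aPerm p ^ k

lemma Shape.mem {g : Equiv.Perm (Vert (ZMod p))} (hg : Shape p e g) :
    g ∈ GGSGroup p e := by
  obtain ⟨i, j, k, rfl⟩ := hg
  exact mul_mem (mul_mem (zpow_mem aPerm_mem i) (zpow_mem bPerm_mem j)) (zpow_mem aPerm_mem k)

lemma shape_F {i j k : ℤ} :
    F p (aPerm p ^ i * (bPerm p e) ^ j * aPerm p ^ k) = (i : ZMod p) + (k : ZMod p) := by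
  have h := F_shift (nice_of_mem (Shape.mem (p := p) (e := e) ⟨i, j, k, rfl⟩)) (0 : ZMod p)
  simp only [Equiv.Perm.mul_apply] at h
  rw [aPerm_zpow_cons, bPerm_zpow_single, aPerm_zpow_cons] at h
  have := List.head_eq_of_cons_eq h
  linear_combination -this

/-- The first-level section of a shape element. -/
lemma sect_shape_single (i j k : ℤ) (y : ZMod p) :
    sect (aPerm p ^ i * bPerm p e ^ j * aPerm p ^ k) [y]
      = sect (bPerm p e ^ j) [y + k] := by
  have ga := good_aPerm (p := p)
  have gb := good_bPerm (p := p) (e := e)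
  rw [sect_mul ((ga.zpow i).mul (gb.zpow j)) (ga.zpow k), aPerm_zpow_cons,
    sect_mul (ga.zpow i) (gb.zpow j), bPerm_zpow_single, sect_aPerm_zpow_single,
    sect_aPerm_zpow_single, one_mul, mul_one]

lemma Shape.sect_single {g : Equiv.Perm (Vert (ZMod p))} (hg : Shape p e g) (y : ZMod p) :
    Shape p e (sect g [y]) := by
  obtain ⟨i, j, k, rfl⟩ := hg
  rw [sect_shape_single]
  by_cases h : (y + k : ZMod p).val < p - 1
  · refine ⟨((e ⟨(y + (k : ZMod p)).val, h⟩).val : ℤ) * j, 0, 0, ?_⟩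
    rw [sect_bPerm_zpow_single, sect_bPerm_single_lt h]
    rw [← zpow_natCast, ← zpow_mul]
    group
  · refine ⟨0, j, 0, ?_⟩
    rw [sect_bPerm_zpow_single, sect_bPerm_single_ge h]
    group

end GGSAux
namespace GGSAux

variable {p : ℕ} {e : Fin (p - 1) → ZMod p}

/-! ### An abstract Schreier-type generation lemma -/

lemma schreier {Gr : Type*} [Group Gr] {S : Set Gr} {H : Subgroup Gr}
    (hS : Subgroup.closure S = H) {Aa : Type*} [AddCommGroup Aa] {F : Gr → Aa}
    (hF : ∀ g ∈ H, ∀ h ∈ H, F (g * h) = F g + F h)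
    {v : Aa → Gr} (hvH : ∀ h ∈ H, v (F h) ∈ H) (hvF : ∀ h ∈ H, F (v (F h)) = F h)
    {g : Gr} (hg : g ∈ H) (hg0 : F g = 0) :
    g ∈ Subgroup.closure
      {w | ∃ h ∈ H, ∃ s ∈ S, w = v (F h) * s * (v (F h + F s))⁻¹} := by
  set M := Subgroup.closure
      {w | ∃ h ∈ H, ∃ s ∈ S, w = v (F h) * s * (v (F h + F s))⁻¹} with hM
  have hF1 : F 1 = 0 := by
    have h1 := hF 1 H.one_mem 1 H.one_mem
    rw [mul_one] at h1
    -- `h1 : F 1 = F 1 + F 1` gives `F 1 = 0` by cancellation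
    exact (add_right_injective (F 1)
      (show F 1 + 0 = F 1 + F 1 by rw [add_zero]; exact h1)).symm
  have hFinv : ∀ x ∈ H, F x⁻¹ = - F x := by
    intro x hx
    have h1 := hF x hx x⁻¹ (H.inv_mem hx)
    rw [mul_inv_cancel, hF1] at h1
    exact (neg_eq_of_add_eq_zero_right h1.symm).symm
  have key : ∀ x ∈ H, ∀ h ∈ H, v (F h) * x * (v (F h + F x))⁻¹ ∈ M := by
    intro x hx
    rw [← hS] at hx
    induction hx using Subgroup.closure_induction with
    | mem s hs => exact fun h hh => Subgroup.subset_closure ⟨h, hh, s, hs, rfl⟩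
    | one =>
        intro h hh
        rw [hF1, add_zero, mul_one, mul_inv_cancel]
        exact one_mem M
    | mul x y hx hy ihx ihy =>
        intro h hh
        have hxH : x ∈ H := hS ▸ hx
        have hyH : y ∈ H := hS ▸ hy
        have e1 := ihx h hh
        have e2 := ihy (h * x) (H.mul_mem hh hxH)
        rw [hF h hh x hxH] at e2
        have hrw : v (F h) * (x * y) * (v (F h + F (x * y)))⁻¹ =
            (v (F h) * x * (v (F h + F x))⁻¹) *
              (v (F h + F x) * y * (v ((F h + F x) + F y))⁻¹) := by
          rw [hF x hxH y hyH, add_assoc]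
          group
        rw [hrw]
        exact mul_mem e1 e2
    | inv x hx ih =>
        intro h hh
        have hxH : x ∈ H := hS ▸ hx
        have e1 := ih (h * x⁻¹) (H.mul_mem hh (H.inv_mem hxH))
        rw [hF h hh x⁻¹ (H.inv_mem hxH), hFinv x hxH] at e1
        have hsimp : F h + -F x + F x = F h := by abel
        rw [hsimp] at e1
        have hrw : v (F h) * x⁻¹ * (v (F h + F x⁻¹))⁻¹ =
            (v (F h + - F x) * x * (v (F h))⁻¹)⁻¹ := by
          rw [hFinv x hxH]
          group
        rw [hrw]
        exact inv_mem e1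
  have hv0H : v (F (1 : Gr)) ∈ H := hvH 1 H.one_mem
  have hv0F : F (v (F (1 : Gr))) = 0 := by rw [hvF 1 H.one_mem, hF1]
  have hv0M : v (F (1 : Gr)) ∈ M := by
    have h1 := key (v (F (1 : Gr))) hv0H 1 H.one_mem
    rw [hv0F, add_zero] at h1
    have hid : v (F (1 : Gr)) * v (F (1 : Gr)) * (v (F (1 : Gr)))⁻¹ = v (F (1 : Gr)) := by
      group
    rwa [hid] at h1
  have h2 := key g hg 1 H.one_mem
  rw [hg0, add_zero] at h2
  have hid2 : g = (v (F (1 : Gr)))⁻¹ * (v (F (1 : Gr)) * g * (v (F (1 : Gr)))⁻¹) *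
      v (F (1 : Gr)) := by group
  rw [hid2]
  exact mul_mem (mul_mem (inv_mem hv0M) h2) hv0M

end GGSAux
namespace GGSAux

variable {p : ℕ} {e : Fin (p - 1) → ZMod p}

lemma mem_vstab {A : Type*} {H : Subgroup (Equiv.Perm (Vert A))} {v : Vert A}
    {g : Equiv.Perm (Vert A)} : g ∈ vstab H v ↔ g ∈ H ∧ g v = v := by
  constructor
  · rintro ⟨hg, hfix⟩
    exact ⟨hg, hfix v rfl⟩
  · rintro ⟨hg, hfix⟩
    exact ⟨hg, fun w hw => by rwa [Set.mem_singleton_iff.mp hw]⟩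

lemma sectGrp_eq_closure_image {A : Type*} {K : Subgroup (Equiv.Perm (Vert A))}
    {X : Set (Equiv.Perm (Vert A))} (hKX : Subgroup.closure X = K) {v : Vert A}
    (hGood : ∀ g ∈ K, Good g) (hfix : ∀ g ∈ K, g v = v) :
    sectGrp K v = Subgroup.closure ((fun g => sect g v) '' X) := by
  refine le_antisymm ?_ ?_
  · rw [sectGrp]
    rw [Subgroup.closure_le]
    rintro _ ⟨g, hg, rfl⟩
    have hgK : g ∈ K := hg
    rw [← hKX] at hgK
    induction hgK using Subgroup.closure_induction with
    | mem s hs => exact Subgroup.subset_closure ⟨s, hs, rfl⟩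
    | one =>
        show sect (1 : Equiv.Perm (Vert A)) v ∈ _
        rw [sect_one]; exact one_mem _
    | mul x y hx hy ihx ihy =>
        have hxK : x ∈ K := hKX ▸ hx
        have hyK : y ∈ K := hKX ▸ hy
        show sect (x * y) v ∈ _
        rw [sect_mul (hGood x hxK) (hGood y hyK), hfix y hyK]
        exact mul_mem (ihx hxK) (ihy hyK)
    | inv x hx ih =>
        have hxK : x ∈ K := hKX ▸ hx
        have hfixinv : x⁻¹ v = v := by
          conv_lhs => rw [← hfix x hxK]
          exact Equiv.Perm.inv_apply_self _ _
        show sect x⁻¹ v ∈ _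
        rw [sect_inv (hGood x hxK), hfixinv]
        exact inv_mem (ih hxK)
  · rw [Subgroup.closure_le]
    rintro _ ⟨g, hg, rfl⟩
    have : g ∈ K := hKX ▸ Subgroup.subset_closure hg
    exact Subgroup.subset_closure ⟨g, this, rfl⟩

end GGSAux
namespace GGSAux

variable {p : ℕ} {e : Fin (p - 1) → ZMod p}

lemma zmod_cast_val [NeZero p] (z : ZMod p) : ((z.val : ℕ) : ZMod p) = z :=
  ZMod.natCast_rightInverse z

lemma eq_neg_one_iff_val (hp : 1 < p) (z : ZMod p) : z = -1 ↔ z.val = p - 1 := by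
  haveI : NeZero p := ⟨by omega⟩
  constructor
  · rintro rfl
    have h1 : ((p - 1 : ℕ) : ZMod p) = -1 := by
      push_cast [Nat.cast_sub hp.le]
      rw [ZMod.natCast_self]
      ring
    rw [← h1, ZMod.val_cast_of_lt (by omega)]
  · intro h
    rw [← zmod_cast_val z, h]
    push_cast [Nat.cast_sub hp.le]
    rw [ZMod.natCast_self]
    ring

lemma ne_neg_one_iff_val (hp : 1 < p) (z : ZMod p) : z ≠ -1 ↔ z.val < p - 1 := by
  haveI : NeZero p := ⟨by omega⟩
  rw [Ne, eq_neg_one_iff_val hp]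
  have := ZMod.val_lt z
  omega

lemma sect_bPerm_zpow_apow (hp : 1 < p) {z : ZMod p} (hz : z ≠ -1) (j : ℤ) :
    ∃ M : ℤ, sect (bPerm p e ^ j) [z] = aPerm p ^ M := by
  have hv : z.val < p - 1 := (ne_neg_one_iff_val hp z).mp hz
  refine ⟨((e ⟨z.val, hv⟩).val : ℤ) * j, ?_⟩
  rw [sect_bPerm_zpow_single, sect_bPerm_single_lt hv, ← zpow_natCast, ← zpow_mul]

lemma sect_pow_of_nohit {t : Equiv.Perm (Vert (ZMod p))} (ht : Nice p t) {kk : ZMod p}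
    (hts : ∀ y : ZMod p, y + kk ≠ -1 → ∃ M : ℤ, sect t [y] = aPerm p ^ M) :
    ∀ (m : ℕ) (y : ZMod p),
      (∀ l : ℕ, l < m → y + (l : ZMod p) * F p t + kk ≠ -1) →
      ∃ M : ℤ, sect (t ^ m) [y] = aPerm p ^ M := by
  intro m
  induction m with
  | zero =>
      intro y _
      refine ⟨0, ?_⟩
      rw [pow_zero, sect_one, zpow_zero]
  | succ m ih =>
      intro y hy
      obtain ⟨M2, hM2⟩ := hts y (by
        have := hy 0 (Nat.succ_pos m)
        simpa using this)
      obtain ⟨M1, hM1⟩ := ih (y + F p t) (by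
        intro l hl
        have := hy (l + 1) (by omega)
        push_cast at this ⊢
        convert this using 2
        ring)
      refine ⟨M1 + M2, ?_⟩
      rw [pow_succ, sect_mul (ht.good.pow m) ht.good, F_shift ht y, hM1, hM2, zpow_add]

end GGSAux
namespace GGSAux

variable {p : ℕ} {e : Fin (p - 1) → ZMod p}

lemma level1_core (x : ZMod p) (H : Subgroup (Equiv.Perm (Vert (ZMod p))))
    (hHG : H ≤ GGSGroup p e) (S : Set (Equiv.Perm (Vert (ZMod p))))
    (hS : Subgroup.closure S = H) (hshape : ∀ s ∈ S, Shape p e s)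
    (vfun : ZMod p → Equiv.Perm (Vert (ZMod p)))
    (hvH : ∀ h ∈ H, vfun (F p h) ∈ H)
    (hvF : ∀ h ∈ H, F p (vfun (F p h)) = F p h)
    (hAPOW : ∀ h ∈ H, ∃ M : ℤ, sect (vfun (F p h)) [x - F p h] = aPerm p ^ M) :
    ∃ S' : Set (Equiv.Perm (Vert (ZMod p))),
      Subgroup.closure S' = sectGrp (vstab H [x]) [x] ∧ ∀ g ∈ S', Shape p e g := by
  have hNice : ∀ g ∈ H, Nice p g := fun g hg => nice_of_mem (hHG hg)
  have hF : ∀ g ∈ H, ∀ h ∈ H, F p (g * h) = F p g + F p h :=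
    fun g hg h hh => F_mul (hNice g hg) (hNice h hh)
  set Gen := {w | ∃ h ∈ H, ∃ s ∈ S, w = vfun (F p h) * s * (vfun (F p h + F p s))⁻¹}
    with hGen
  have hSH : ∀ s ∈ S, s ∈ H := fun s hs => hS ▸ Subgroup.subset_closure hs
  have hGenData : ∀ w ∈ Gen, ∃ h ∈ H, ∃ s ∈ S,
      w = vfun (F p h) * s * (vfun (F p h + F p s))⁻¹ ∧ w ∈ H ∧ F p w = 0 := by
    rintro w ⟨h, hh, s, hs, rfl⟩
    have hsH := hSH s hs
    have hhs : h * s ∈ H := H.mul_mem hh hsH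
    have hβ : F p (h * s) = F p h + F p s := hF h hh s hsH
    have h1H : vfun (F p h) ∈ H := hvH h hh
    have h3H : vfun (F p h + F p s) ∈ H := by have := hvH (h * s) hhs; rwa [hβ] at this
    have hwH : vfun (F p h) * s * (vfun (F p h + F p s))⁻¹ ∈ H :=
      H.mul_mem (H.mul_mem h1H hsH) (H.inv_mem h3H)
    refine ⟨h, hh, s, hs, rfl, hwH, ?_⟩
    have h3F : F p (vfun (F p h + F p s)) = F p h + F p s := by
      have := hvF (h * s) hhs; rwa [hβ] at this
    rw [hF _ (H.mul_mem h1H hsH) _ (H.inv_mem h3H), hF _ h1H _ hsH,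
      F_inv (hNice _ h3H), h3F, hvF h hh]
    ring
  have hGenStab : ∀ w ∈ Gen, w ∈ vstab H [x] := by
    intro w hw
    obtain ⟨h, hh, s, hs, _, hwH, hwF⟩ := hGenData w hw
    refine mem_vstab.mpr ⟨hwH, ?_⟩
    rw [F_shift (hNice w hwH) x, hwF, add_zero]
  have hstab_eq : Subgroup.closure Gen = vstab H [x] := by
    refine le_antisymm ((Subgroup.closure_le _).mpr hGenStab) ?_
    intro g hg
    obtain ⟨hgH, hgfix⟩ := mem_vstab.mp hg
    have hg0 : F p g = 0 := by
      have := F_shift (hNice g hgH) x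
      rw [hgfix] at this
      have h2 := List.head_eq_of_cons_eq this.symm
      linear_combination h2
    exact schreier hS hF hvH hvF hgH hg0
  have key := sectGrp_eq_closure_image (v := [x]) hstab_eq
    (fun g hg => (hNice g (mem_vstab.mp hg).1).good) (fun g hg => (mem_vstab.mp hg).2)
  refine ⟨(fun g => sect g [x]) '' Gen, key.symm, ?_⟩
  rintro _ ⟨w, hw, rfl⟩
  obtain ⟨h, hh, s, hs, hweq, hwH, hwF⟩ := hGenData w hw
  have hsH := hSH s hs
  have hhs : h * s ∈ H := H.mul_mem hh hsH
  have hβ : F p (h * s) = F p h + F p s := hF h hh s hsH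
  set g1 := vfun (F p h) with hg1
  set g3 := vfun (F p h + F p s) with hg3
  have h1H : g1 ∈ H := hvH h hh
  have h3H : g3 ∈ H := by have := hvH (h * s) hhs; rwa [hβ] at this
  have h1N := hNice g1 h1H
  have h3N := hNice g3 h3H
  have hsN := hNice s hsH
  have h3F : F p g3 = F p h + F p s := by have := hvF (h * s) hhs; rwa [hβ] at this
  -- the vertices
  have hv3 : g3⁻¹ [x] = [x - (F p h + F p s)] := by
    rw [F_shift h3N.inv, F_inv h3N, h3F, sub_eq_add_neg]
  have hv2 : s (g3⁻¹ [x]) = [x - F p h] := by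
    rw [hv3, F_shift hsN]
    congr 1
    ring
  -- the three factors
  obtain ⟨M1, hM1⟩ := hAPOW h hh
  obtain ⟨M3, hM3⟩ := hAPOW (h * s) hhs
  rw [hβ] at hM3
  obtain ⟨i', j', k', hmid⟩ := (hshape s hs).sect_single (x - (F p h + F p s))
  have hcomp : sect w [x] = aPerm p ^ M1 *
      (aPerm p ^ i' * bPerm p e ^ j' * aPerm p ^ k') * (aPerm p ^ M3)⁻¹ := by
    rw [hweq, sect_mul ((h1N.good.mul hsN.good)) h3N.inv.good,
      sect_mul h1N.good hsN.good, sect_inv h3N.good, hv2, hv3, hg1, hM1, hmid, hg3, hM3]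
  refine ⟨M1 + i', j', k' - M3, ?_⟩
  show sect w [x] = _
  rw [hcomp]
  group

end GGSAux
namespace GGSAux

variable {p : ℕ} {e : Fin (p - 1) → ZMod p}

lemma level1 (hp : p.Prime) (x : ZMod p) (H : Subgroup (Equiv.Perm (Vert (ZMod p))))
    (hHG : H ≤ GGSGroup p e) (S : Set (Equiv.Perm (Vert (ZMod p))))
    (hS : Subgroup.closure S = H) (hshape : ∀ s ∈ S, Shape p e s) :
    ∃ S' : Set (Equiv.Perm (Vert (ZMod p))),
      Subgroup.closure S' = sectGrp (vstab H [x]) [x] ∧ ∀ g ∈ S', Shape p e g := by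
  haveI : Fact p.Prime := ⟨hp⟩
  haveI : NeZero p := ⟨hp.pos.ne'⟩
  have hp1 : 1 < p := hp.one_lt
  have hNice : ∀ g ∈ H, Nice p g := fun g hg => nice_of_mem (hHG hg)
  by_cases hA : ∀ s ∈ S, F p s = 0
  · -- all generators stabilize the first level
    have hH0 : ∀ h ∈ H, F p h = 0 := by
      intro h hh
      rw [← hS] at hh
      induction hh using Subgroup.closure_induction with
      | mem s hs => exact hA s hs
      | one => exact F_one
      | mul a b ha hb iha ihb =>
          have haH : a ∈ H := hS ▸ ha
          have hbH : b ∈ H := hS ▸ hb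
          rw [F_mul (hNice a haH) (hNice b hbH), iha, ihb, add_zero]
      | inv a ha iha =>
          have haH : a ∈ H := hS ▸ ha
          rw [F_inv (hNice a haH), iha, neg_zero]
    exact level1_core x H hHG S hS hshape (fun _ => 1) (fun h hh => H.one_mem)
      (fun h hh => by rw [F_one, hH0 h hh])
      (fun h hh => ⟨0, by rw [sect_one, zpow_zero]⟩)
  · -- some generator moves the first level
    push_neg at hA
    obtain ⟨t, htS, htc⟩ := hA
    have htH : t ∈ H := hS ▸ Subgroup.subset_closure htS
    have htN : Nice p t := hNice t htH
    obtain ⟨it, jt, kt, htsh⟩ := hshape t htS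
    set c := F p t with hc
    have hts : ∀ y : ZMod p, y + (kt : ZMod p) ≠ -1 →
        ∃ M : ℤ, sect t [y] = aPerm p ^ M := by
      intro y hy
      rw [htsh, sect_shape_single]
      exact sect_bPerm_zpow_apow hp1 hy jt
    set nstar := ((x + (kt : ZMod p) + 1) * c⁻¹).val with hnstar
    have hnstar_lt : nstar < p := ZMod.val_lt _
    have hnstar_eq : ((nstar : ℕ) : ZMod p) * c = x + (kt : ZMod p) + 1 := by
      rw [hnstar, zmod_cast_val, mul_assoc, inv_mul_cancel₀ htc, mul_one]
    set vfun := fun α : ZMod p =>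
      if ((α * c⁻¹).val < nstar ∨ nstar = 0) then t ^ (((α * c⁻¹).val : ℕ) : ℤ)
      else t ^ ((((α * c⁻¹).val : ℕ) : ℤ) - (p : ℤ)) with hvfun
    have hvmem : ∀ α, vfun α ∈ H := by
      intro α
      simp only [hvfun]
      split <;> exact zpow_mem htH _
    have hqval : ∀ α : ZMod p, ((α * c⁻¹).val : ZMod p) * c = α := by
      intro α
      rw [zmod_cast_val, mul_assoc, inv_mul_cancel₀ htc, mul_one]
    have hvF : ∀ α : ZMod p, F p (vfun α) = α := by
      intro α
      simp only [hvfun]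
      split
      · rw [F_zpow htN, ← hc]
        push_cast
        exact hqval α
      · rw [F_zpow htN, ← hc]
        push_cast
        rw [ZMod.natCast_self]
        have := hqval α
        linear_combination this
    have hAPOW : ∀ α : ZMod p, ∃ M : ℤ, sect (vfun α) [x - α] = aPerm p ^ M := by
      intro α
      set q := (α * c⁻¹).val with hq
      have hqlt : q < p := ZMod.val_lt _
      have hα : ((q : ℕ) : ZMod p) * c = α := hqval α
      simp only [hvfun]
      split
      · -- nonnegative representative
        rename_i hcase
        rw [zpow_natCast]
        refine sect_pow_of_nohit htN hts q (x - α) ?_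
        intro l hl heq
        rw [← hc] at heq
        have h1 : ((q - l : ℕ) : ZMod p) * c = ((nstar : ℕ) : ZMod p) * c := by
          rw [hnstar_eq]
          push_cast [Nat.cast_sub hl.le]
          linear_combination -heq + hα
        have hcc := mul_right_cancel₀ htc h1
        have h2 := congrArg ZMod.val hcc
        rw [ZMod.val_cast_of_lt (by omega), ZMod.val_cast_of_lt hnstar_lt] at h2
        omega
      · -- negative representative
        rename_i hcase
        push_neg at hcase
        obtain ⟨hns1, hns2⟩ := hcase
        set u := p - q with hu
        have hzpow : t ^ ((q : ℤ) - (p : ℤ)) = (t ^ u)⁻¹ := by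
          rw [show (q : ℤ) - (p : ℤ) = -(u : ℤ) by
            rw [hu]; push_cast [Nat.cast_sub hqlt.le]; ring]
          rw [zpow_neg, zpow_natCast]
        rw [hzpow]
        have hNu : Nice p (t ^ u) := by
          have := htN.zpow (u : ℤ); rwa [zpow_natCast] at this
        have hFu : F p (t ^ u) = ((u : ℕ) : ZMod p) * c := by
          have := F_zpow htN (u : ℤ)
          rwa [zpow_natCast, Int.cast_natCast, ← hc] at this
        have hvert : (t ^ u)⁻¹ [x - α] = [x] := by
          rw [F_shift hNu.inv, F_inv hNu, hFu]
          congr 1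
          have huq : ((u : ℕ) : ZMod p) = - ((q : ℕ) : ZMod p) := by
            rw [hu]; push_cast [Nat.cast_sub hqlt.le]; rw [ZMod.natCast_self]; ring
          rw [huq, ← hα]; ring
        rw [sect_inv (htN.good.pow u), hvert]
        have hnohit : ∀ l : ℕ, l < u → x + (l : ZMod p) * F p t + (kt : ZMod p) ≠ -1 := by
          intro l hl heq
          rw [← hc] at heq
          have h1 : ((nstar + l : ℕ) : ZMod p) * c = 0 := by
            push_cast
            linear_combination heq + hnstar_eq
          have h2 : ((nstar + l : ℕ) : ZMod p) = 0 := by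
            rcases mul_eq_zero.mp h1 with h | h
            · exact h
            · exact absurd h htc
          have h3 : p ∣ nstar + l := (ZMod.natCast_eq_zero_iff _ _).mp h2
          have h4 := Nat.le_of_dvd (by omega) h3
          omega
        obtain ⟨M, hM⟩ := sect_pow_of_nohit htN hts u x hnohit
        exact ⟨-M, by rw [hM, ← zpow_neg]⟩
    exact level1_core x H hHG S hS hshape vfun (fun h hh => hvmem _)
      (fun h hh => hvF _) (fun h hh => hAPOW _)

end GGSAux
namespace GGSAux

variable {p : ℕ} {e : Fin (p - 1) → ZMod p}

lemma cons_eq_append (x : ZMod p) (w : Vert (ZMod p)) : x :: w = [x] ++ w := rfl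

lemma main_lemma (hp : p.Prime) :
    ∀ (v : Vert (ZMod p)) (H : Subgroup (Equiv.Perm (Vert (ZMod p)))),
      H ≤ GGSGroup p e →
      (∃ S, Subgroup.closure S = H ∧ ∀ s ∈ S, Shape p e s) →
      ∃ S', Subgroup.closure S' = sectGrp (vstab H v) v ∧ ∀ g ∈ S', Shape p e g := by
  intro v
  induction v with
  | nil =>
      rintro H hHG ⟨S, hS, hsh⟩
      refine ⟨S, ?_, hsh⟩
      have hfix : ∀ g ∈ H, g ([] : Vert (ZMod p)) = [] :=
        fun g hg => (nice_of_mem (hHG hg)).2.1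
      have hvstab : vstab H ([] : Vert (ZMod p)) = H := by
        ext g
        rw [mem_vstab]
        exact ⟨fun h => h.1, fun h => ⟨h, hfix g h⟩⟩
      have hsect : ∀ g ∈ H, sect g ([] : Vert (ZMod p)) = g := by
        intro g hg
        refine sect_unique (nice_of_mem (hHG hg)).good (fun w => ?_)
        rw [List.nil_append, hfix g hg, List.nil_append]
      have hgoal : sectGrp (vstab H ([] : Vert (ZMod p))) [] = H := by
        rw [hvstab, sectGrp]
        have himg : (fun g => sect g ([] : Vert (ZMod p))) '' (H : Set _) = (H : Set _) := by
          ext g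
          constructor
          · rintro ⟨g', hg', rfl⟩
            show sect g' [] ∈ _
            rw [hsect g' hg']
            exact hg'
          · intro hg
            exact ⟨g, hg, hsect g hg⟩
        rw [himg, Subgroup.closure_eq]
      rw [hgoal, hS]
  | cons x w ih =>
      rintro H hHG ⟨S, hS, hsh⟩
      obtain ⟨S₁, hS₁, hsh₁⟩ := level1 hp x H hHG S hS hsh
      set H' := sectGrp (vstab H [x]) [x] with hH'
      have hH'G : H' ≤ GGSGroup p e := by
        rw [← hS₁, Subgroup.closure_le]
        exact fun g hg => SetLike.mem_coe.mpr (hsh₁ g hg).mem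
      have hKdata : ∀ g ∈ vstab H [x], Nice p g ∧ g [x] = [x] := fun g hg =>
        ⟨nice_of_mem (hHG (mem_vstab.mp hg).1), (mem_vstab.mp hg).2⟩
      -- every element of H' is a section of a stabilizer element
      have himg : ∀ h' ∈ H', ∃ g ∈ vstab H [x], sect g [x] = h' := by
        intro h' hh'
        rw [hH', sectGrp] at hh'
        induction hh' using Subgroup.closure_induction with
        | mem y hy =>
            obtain ⟨g, hg, rfl⟩ := hy
            exact ⟨g, hg, rfl⟩
        | one => exact ⟨1, (vstab H [x]).one_mem, sect_one _⟩
        | mul y z hy hz ihy ihz =>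
            obtain ⟨g, hg, rfl⟩ := ihy
            obtain ⟨g', hg', rfl⟩ := ihz
            refine ⟨g * g', mul_mem hg hg', ?_⟩
            rw [sect_mul (hKdata g hg).1.good (hKdata g' hg').1.good, (hKdata g' hg').2]
        | inv y hy ihy =>
            obtain ⟨g, hg, rfl⟩ := ihy
            refine ⟨g⁻¹, inv_mem hg, ?_⟩
            have hfixinv : g⁻¹ [x] = [x] := by
              conv_lhs => rw [← (hKdata g hg).2]
              exact Equiv.Perm.inv_apply_self _ _
            rw [sect_inv (hKdata g hg).1.good, hfixinv]
      -- the two section sets coincide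
      have hsets : (fun g => sect g (x :: w)) '' ((vstab H (x :: w) : Set _))
          = (fun g => sect g w) '' ((vstab H' w : Set _)) := by
        ext σ
        constructor
        · rintro ⟨g, hg, rfl⟩
          obtain ⟨hgH, hgfix⟩ := mem_vstab.mp hg
          have hgN := nice_of_mem (hHG hgH)
          have hsplit : g (x :: w) = (x + F p g) :: sect g [x] w := by
            rw [cons_eq_append, sect_spec hgN.good [x] w, F_shift hgN x]
            rfl
          rw [hgfix] at hsplit
          have hx1 : x = x + F p g := List.head_eq_of_cons_eq hsplit
          have hx2 : w = sect g [x] w := List.tail_eq_of_cons_eq hsplit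
          have hgfix1 : g [x] = [x] := by
            rw [F_shift hgN x, ← hx1]
          have hgK : g ∈ vstab H [x] := mem_vstab.mpr ⟨hgH, hgfix1⟩
          have hsH' : sect g [x] ∈ H' := by
            rw [hH', sectGrp]
            exact Subgroup.subset_closure ⟨g, hgK, rfl⟩
          refine ⟨sect g [x], mem_vstab.mpr ⟨hsH', hx2.symm⟩, ?_⟩
          show sect (sect g [x]) w = sect g ([x] ++ w)
          rw [sect_append hgN.good]
        · rintro ⟨h', hh', rfl⟩
          obtain ⟨hh'H', hh'fix⟩ := mem_vstab.mp hh'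
          obtain ⟨g, hgK, rfl⟩ := himg h' hh'H'
          obtain ⟨hgH, hgfixx⟩ := mem_vstab.mp hgK
          have hgN := nice_of_mem (hHG hgH)
          have hgfix : g (x :: w) = x :: w := by
            rw [cons_eq_append, sect_spec hgN.good [x] w, hgfixx, hh'fix]
          refine ⟨g, mem_vstab.mpr ⟨hgH, hgfix⟩, ?_⟩
          show sect g ([x] ++ w) = sect (sect g [x]) w
          rw [sect_append hgN.good]
      have hrec : sectGrp (vstab H (x :: w)) (x :: w) = sectGrp (vstab H' w) w := by
        rw [sectGrp, sectGrp, hsets]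
      obtain ⟨S', h1, h2⟩ := ih H' hH'G ⟨S₁, hS₁, hsh₁⟩
      exact ⟨S', by rw [h1, hrec], h2⟩

end GGSAux
namespace GGSAux

variable {p : ℕ} {e : Fin (p - 1) → ZMod p}

lemma Shape.bLen_le_one {g : Equiv.Perm (Vert (ZMod p))} (hg : Shape p e g) :
    bLen p e g ≤ 1 := by
  obtain ⟨i, j, k, rfl⟩ := hg
  apply Nat.sInf_le
  refine ⟨fun n => if n = 0 then i else k, fun _ => j, ?_⟩
  simp [show List.range 1 = [0] from rfl, mul_assoc]

/-- Every element of the GGS group is a product of syllables. -/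
lemma exists_word {g : Equiv.Perm (Vert (ZMod p))} (hg : g ∈ GGSGroup p e) :
    ∃ (L : List (ℤ × ℤ)) (z : ℤ),
      g = (L.map fun q => aPerm p ^ q.1 * bPerm p e ^ q.2).prod * aPerm p ^ z := by
  have word_inv : ∀ (L : List (ℤ × ℤ)) (z : ℤ), ∃ (L' : List (ℤ × ℤ)) (z' : ℤ),
      ((L.map fun q => aPerm p ^ q.1 * bPerm p e ^ q.2).prod * aPerm p ^ z)⁻¹
        = (L'.map fun q => aPerm p ^ q.1 * bPerm p e ^ q.2).prod * aPerm p ^ z' := by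
    intro L
    induction L with
    | nil => exact fun z => ⟨[], -z, by simp [zpow_neg]⟩
    | cons q L ihL =>
        intro z
        obtain ⟨L', z', hL'⟩ := ihL z
        refine ⟨L' ++ [(z', -q.2)], -q.1, ?_⟩
        rw [List.map_cons, List.prod_cons, List.map_append, List.prod_append]
        simp only [List.map_cons, List.prod_cons, List.map_nil, List.prod_nil]
        rw [show (aPerm p ^ q.1 * bPerm p e ^ q.2 *
            (L.map fun q => aPerm p ^ q.1 * bPerm p e ^ q.2).prod * aPerm p ^ z)⁻¹
          = ((L.map fun q => aPerm p ^ q.1 * bPerm p e ^ q.2).prod * aPerm p ^ z)⁻¹ *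
            (bPerm p e ^ (-q.2) * aPerm p ^ (-q.1)) by group]
        rw [hL']
        group
  induction hg using Subgroup.closure_induction with
  | mem s hs =>
      rcases hs with hs | hs
      · exact ⟨[], 1, by simp [hs]⟩
      · rw [Set.mem_singleton_iff] at hs
        exact ⟨[(0, 1)], 0, by simp [hs]⟩
  | one => exact ⟨[], 0, by simp⟩
  | mul a b _ _ iha ihb =>
      obtain ⟨L1, z1, rfl⟩ := iha
      obtain ⟨L2, z2, rfl⟩ := ihb
      cases L2 with
      | nil =>
          refine ⟨L1, z1 + z2, ?_⟩
          simp only [List.map_nil, List.prod_nil, one_mul]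
          rw [zpow_add]
          group
      | cons q L2 =>
          refine ⟨L1 ++ (z1 + q.1, q.2) :: L2, z2, ?_⟩
          rw [List.map_append, List.prod_append, List.map_cons, List.prod_cons,
            List.map_cons, List.prod_cons, zpow_add]
          group
  | inv a _ iha =>
      obtain ⟨L, z, rfl⟩ := iha
      exact word_inv L z

lemma word_to_bWordLe (L : List (ℤ × ℤ)) (z : ℤ) {g : Equiv.Perm (Vert (ZMod p))}
    (hg : g = (L.map fun q => aPerm p ^ q.1 * bPerm p e ^ q.2).prod * aPerm p ^ z) :
    bWordLe p e g L.length := by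
  refine ⟨fun k => (L.getD k (z, 0)).1, fun k => (L.getD k (z, 0)).2, ?_⟩
  have hlist : (List.range L.length).map
      (fun k => aPerm p ^ (L.getD k (z, 0)).1 * bPerm p e ^ (L.getD k (z, 0)).2)
      = L.map fun q => aPerm p ^ q.1 * bPerm p e ^ q.2 := by
    apply List.ext_getElem
    · simp
    · intro k hk1 hk2
      have hkL : k < L.length := by simpa using hk2
      simp only [List.getElem_map, List.getElem_range]
      rw [List.getD_eq_getElem _ _ hkL]
  show g = ((List.range L.length).map fun k =>
      aPerm p ^ (L.getD k (z, 0)).1 * bPerm p e ^ (L.getD k (z, 0)).2).prod *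
      aPerm p ^ (L.getD L.length (z, 0)).1
  rw [hlist, List.getD_eq_default _ _ (le_refl L.length)]
  exact hg

lemma shape_of_bLen {g : Equiv.Perm (Vert (ZMod p))} (hg : g ∈ GGSGroup p e)
    (hb : bLen p e g ≤ 1) : Shape p e g := by
  obtain ⟨L, z, hw⟩ := exists_word hg
  have hne : {n : ℕ | bWordLe p e g n}.Nonempty := ⟨L.length, word_to_bWordLe L z hw⟩
  have hmem : bWordLe p e g (bLen p e g) := Nat.sInf_mem hne
  rcases Nat.le_one_iff_eq_zero_or_eq_one.mp hb with h0 | h1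
  · rw [h0] at hmem
    obtain ⟨i, j, hgw⟩ := hmem
    simp only [List.range_zero, List.map_nil, List.prod_nil, one_mul] at hgw
    exact ⟨i 0, 0, 0, by rw [hgw]; group⟩
  · rw [h1] at hmem
    obtain ⟨i, j, hgw⟩ := hmem
    simp only [show List.range 1 = [0] from rfl, List.map_cons, List.map_nil,
      List.prod_cons, List.prod_nil, mul_one] at hgw
    exact ⟨i 0, j 0, i 1, by rw [hgw]⟩

end GGSAux

/-- Lemma 4.13: if `H < G` is a subgroup of a torsion GGS group generated by
elements of `b`-length at most `1`, then for every vertex `v` of the tree the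
subgroup `φ_v(Stab_H(v))` is generated by elements of `b`-length at most `1`. -/
theorem statement17 (p : ℕ) (hp : p.Prime) (hodd : Odd p)
    (e : Fin (p - 1) → ZMod p) (he : e ≠ 0)
    (htor : ∀ g ∈ GGSGroup p e, IsOfFinOrder g)
    (H : Subgroup (Equiv.Perm (Vert (ZMod p)))) (hHG : H < GGSGroup p e)
    (hgen : ∃ S : Set (Equiv.Perm (Vert (ZMod p))),
      (∀ s ∈ S, bLen p e s ≤ 1) ∧ Subgroup.closure S = H) :
    ∀ v : Vert (ZMod p),
      ∃ S' : Set (Equiv.Perm (Vert (ZMod p))),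
        Subgroup.closure S' = sectGrp (vstab H v) v ∧
        ∀ s ∈ S', bLen p e s ≤ 1 := by
  intro v
  obtain ⟨S, hble, hS⟩ := hgen
  have hHG' : H ≤ GGSGroup p e := le_of_lt hHG
  have hsh : ∀ s ∈ S, GGSAux.Shape p e s := fun s hs =>
    GGSAux.shape_of_bLen (hHG' (hS ▸ Subgroup.subset_closure hs)) (hble s hs)
  obtain ⟨S', h1, h2⟩ := GGSAux.main_lemma hp v H hHG' ⟨S, hS, hsh⟩
  exact ⟨S', h1, fun s hs => (h2 s hs).bLen_le_one⟩
end
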